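/- Let μ ∈ ℤ^n and α a positive root of type C_n with ⟨μ, α⟩ ≤ −2. Then μ + rα^∨ ≺ μ for r = 1, …, −⟨μ,α⟩ − 1, where ≺ is the order in which ν ≺ μ iff ν^+ < μ^+, or ν^+ = μ^+ and ν < μ (with < meaning the difference lies in the positive coroot cone and is nonzero). -/
import Mathlib


noncomputable section

/-- Standard basis vector e_i of ℤ^n. -/
def ez {n : ℕ} (i : Fin n) : Fin n → ℤ := fun j => if j = i then 1 else 0

/-- Pairing ⟨μ, α⟩ on ℤ^n. -/
def ipz {n : ℕ} (f g : Fin n → ℤ) : ℤ := ∑ i, f i * g i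

/-- The positive roots Σ^+ of type C_n: ε_i − ε_j, ε_i + ε_j (i < j), 2ε_i. -/
def SigmaPlus (n : ℕ) : Set (Fin n → ℤ) :=
  {α | (∃ i j : Fin n, i < j ∧ (α = ez i - ez j ∨ α = ez i + ez j)) ∨ (∃ i, α = (2 : ℤ) • ez i)}

/-- The coroot α^∨ = 2α/⟨α,α⟩ (for α a root of type C_n the formula below gives
exactly the coroot, using integer division). -/
def coroot {n : ℕ} (α : Fin n → ℤ) : Fin n → ℤ := fun i => (2 * α i) / (∑ j, α j * α j)

/-- The k-th simple coroot of type C_n: e_k − e_{k+1} for k < n−1, and e_{n−1} for k = n−1. -/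
def scoroot {n : ℕ} (k : Fin n) : Fin n → ℤ :=
  fun j => (if j = k then 1 else 0) -
    (if ((j : ℕ) = (k : ℕ) + 1 ∧ (k : ℕ) + 1 < n) then 1 else 0)

/-- Membership in Q^{∨,+}, the nonnegative integer span of the simple coroots. -/
def Qpos {n : ℕ} (v : Fin n → ℤ) : Prop :=
  ∃ c : Fin n → ℕ, v = ∑ k, (c k : ℤ) • scoroot k

/-- λ ≤ μ iff μ − λ ∈ Q^{∨,+}. -/
def wle {n : ℕ} (ν μ : Fin n → ℤ) : Prop := Qpos (μ - ν)

/-- μ is in the orbit of lam under W = S_n ⋉ (±1)^n. -/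
def InOrbit {n : ℕ} (lam μ : Fin n → ℤ) : Prop :=
  ∃ (σ : Equiv.Perm (Fin n)) (s : Fin n → ℤ),
    (∀ i, s i = 1 ∨ s i = -1) ∧ ∀ i, μ i = s i * lam (σ i)

/-- Dominant: weakly decreasing with nonnegative entries. -/
def Dominant {n : ℕ} (μ : Fin n → ℤ) : Prop :=
  (∀ i j : Fin n, i ≤ j → μ j ≤ μ i) ∧ ∀ i, 0 ≤ μ i

/-- μ⁺ : the dominant representative of the orbit W·lam. -/
def IsDomRep {n : ℕ} (lam mup : Fin n → ℤ) : Prop := Dominant mup ∧ InOrbit lam mup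

variable {n : ℕ}

def psum (v : Fin n → ℤ) (k : Fin n) : ℤ := ∑ i ∈ Finset.univ.filter (· ≤ k), v i

lemma psum_scoroot (j k : Fin n) : psum (scoroot j) k = if j = k then 1 else 0 := by
  unfold psum scoroot
  rw [Finset.sum_sub_distrib, Finset.sum_ite_eq' (Finset.univ.filter (· ≤ k)) j (fun _ => (1:ℤ))]
  by_cases hn : (j:ℕ) + 1 < n
  · have h2 : ∑ i ∈ Finset.univ.filter (· ≤ k),
        (if ((i : ℕ) = (j : ℕ) + 1 ∧ (j : ℕ) + 1 < n) then (1:ℤ) else 0)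
        = if (⟨(j:ℕ)+1, hn⟩ : Fin n) ∈ Finset.univ.filter (· ≤ k) then 1 else 0 := by
      rw [← Finset.sum_ite_eq' (Finset.univ.filter (· ≤ k)) (⟨(j:ℕ)+1, hn⟩ : Fin n) (fun _ => (1:ℤ))]
      refine Finset.sum_congr rfl fun i _ => ?_
      congr 1
      simp [Fin.ext_iff, hn]
    rw [h2]
    have hk := k.isLt
    simp only [Finset.mem_filter, Finset.mem_univ, true_and, Fin.le_def, Fin.ext_iff]
    split_ifs <;> omega
  · have h2 : ∑ i ∈ Finset.univ.filter (· ≤ k),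
        (if ((i : ℕ) = (j : ℕ) + 1 ∧ (j : ℕ) + 1 < n) then (1:ℤ) else 0) = 0 := by
      refine Finset.sum_eq_zero fun i _ => by simp [hn]
    rw [h2]
    have hk := k.isLt
    have hj := j.isLt
    simp only [Finset.mem_filter, Finset.mem_univ, true_and, Fin.le_def, Fin.ext_iff]
    split_ifs <;> omega

lemma psum_first (v : Fin n → ℤ) (l : Fin n) (h : (l : ℕ) = 0) : psum v l = v l := by
  unfold psum
  have : Finset.univ.filter (· ≤ l) = {l} := by
    ext i
    simp [Fin.le_def, Fin.ext_iff, h]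
  rw [this, Finset.sum_singleton]

lemma psum_succ (v : Fin n → ℤ) (k0 l : Fin n) (h : (l : ℕ) = (k0 : ℕ) + 1) :
    psum v l = psum v k0 + v l := by
  unfold psum
  have hs : Finset.univ.filter (· ≤ l) = insert l (Finset.univ.filter (· ≤ k0)) := by
    ext i
    simp only [Finset.mem_filter, Finset.mem_univ, true_and, Finset.mem_insert, Fin.le_def,
      Fin.ext_iff]
    omega
  rw [hs, Finset.sum_insert (by
    simp only [Finset.mem_filter, Finset.mem_univ, true_and, Fin.le_def]; omega)]
  ring

lemma qpos_iff (v : Fin n → ℤ) : Qpos v ↔ ∀ k, 0 ≤ psum v k := by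
  constructor
  · rintro ⟨c, rfl⟩ k
    have h1 : psum (∑ m, (c m : ℤ) • scoroot m) k = ∑ m, (c m : ℤ) * psum (scoroot m) k := by
      unfold psum
      simp only [Finset.sum_apply, Pi.smul_apply, smul_eq_mul]
      rw [Finset.sum_comm]
      exact Finset.sum_congr rfl fun m _ => (Finset.mul_sum _ _ _).symm
    rw [h1]
    have h2 : ∑ m, (c m : ℤ) * psum (scoroot m) k = c k := by
      simp only [psum_scoroot, mul_ite, mul_one, mul_zero]
      rw [Finset.sum_ite_eq' Finset.univ k (fun m => (c m : ℤ))]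
      simp
    rw [h2]
    positivity
  · intro hp
    refine ⟨fun k => (psum v k).toNat, funext fun l => ?_⟩
    have hc : ∀ k : Fin n, ((psum v k).toNat : ℤ) = psum v k := fun k => Int.toNat_of_nonneg (hp k)
    rw [Finset.sum_apply]
    simp only [Pi.smul_apply, smul_eq_mul, hc]
    unfold scoroot
    simp only [mul_sub]
    rw [Finset.sum_sub_distrib]
    have hA : ∑ m : Fin n, psum v m * (if l = m then (1:ℤ) else 0) = psum v l := by
      simp only [mul_ite, mul_one, mul_zero]
      rw [Finset.sum_ite_eq Finset.univ l (fun m => psum v m)]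
      simp
    rw [hA]
    by_cases h0 : (l : ℕ) = 0
    · have hB : ∑ m : Fin n, psum v m * (if ((l:ℕ) = (m:ℕ) + 1 ∧ (m:ℕ) + 1 < n) then (1:ℤ) else 0) = 0 :=
        Finset.sum_eq_zero fun m _ => by
          rw [if_neg (by omega), mul_zero]
      rw [hB, psum_first v l h0]
      ring
    · have hl := l.isLt
      set k0 : Fin n := ⟨(l:ℕ) - 1, by omega⟩ with hk0
      have hk0l : (l : ℕ) = (k0 : ℕ) + 1 := by simp [hk0]; omega
      have hB : ∑ m : Fin n, psum v m * (if ((l:ℕ) = (m:ℕ) + 1 ∧ (m:ℕ) + 1 < n) then (1:ℤ) else 0)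
          = psum v k0 := by
        rw [Finset.sum_eq_single k0]
        · rw [if_pos ⟨hk0l, by omega⟩, mul_one]
        · intro m _ hm
          rw [if_neg, mul_zero]
          rintro ⟨h1, -⟩
          exact hm (Fin.ext (by omega))
        · intro h; exact absurd (Finset.mem_univ k0) h
      rw [hB, psum_succ v k0 l hk0l]
      ring






lemma sum_le_psum (mup : Fin n → ℤ) (hsort : ∀ i j : Fin n, i ≤ j → mup j ≤ mup i)
    (k : Fin n) (S : Finset (Fin n))
    (hcard : S.card = (Finset.univ.filter (· ≤ k)).card) :
    ∑ l ∈ S, mup l ≤ psum mup k := by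
  set P := Finset.univ.filter (· ≤ k) with hP
  have h1 : ∑ l ∈ S ∩ P, mup l + ∑ l ∈ S \ P, mup l = ∑ l ∈ S, mup l :=
    Finset.sum_inter_add_sum_sdiff S P mup
  have h2 : ∑ l ∈ P ∩ S, mup l + ∑ l ∈ P \ S, mup l = ∑ l ∈ P, mup l :=
    Finset.sum_inter_add_sum_sdiff P S mup
  have hd : (S \ P).card = (P \ S).card := by
    have e1 := Finset.card_sdiff_add_card_inter S P
    have e2 := Finset.card_sdiff_add_card_inter P S
    rw [Finset.inter_comm] at e2
    omega
  have h3 : ∑ l ∈ S \ P, mup l ≤ (S \ P).card • mup k := by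
    refine Finset.sum_le_card_nsmul _ _ _ fun x hx => ?_
    have hx' : ¬ x ≤ k := by
      have := (Finset.mem_sdiff.mp hx).2
      simpa [hP] using this
    exact hsort k x (le_of_not_ge hx')
  have h4 : (P \ S).card • mup k ≤ ∑ l ∈ P \ S, mup l := by
    refine Finset.card_nsmul_le_sum _ _ _ fun x hx => ?_
    have hx' : x ≤ k := by
      have := (Finset.mem_sdiff.mp hx).1
      simpa [hP] using this
    exact hsort x k hx'
  have h5 : ∑ l ∈ S ∩ P, mup l = ∑ l ∈ P ∩ S, mup l := by rw [Finset.inter_comm]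
  rw [hd] at h3
  show ∑ l ∈ S, mup l ≤ ∑ l ∈ P, mup l
  omega

lemma exch (A B : Fin n → ℤ) (i j : Fin n)
    (hoff : ∀ l, l ≠ i → l ≠ j → B l = A l)
    (hb : (B i ≤ A i ∧ B j ≤ A i) ∨ (B i ≤ A j ∧ B j ≤ A j))
    (hsum : B i + B j ≤ A i + A j) (T : Finset (Fin n)) :
    ∃ T' : Finset (Fin n), T'.card = T.card ∧ ∑ l ∈ T, B l ≤ ∑ l ∈ T', A l := by
  by_cases hi : i ∈ T <;> by_cases hj : j ∈ T
  · -- both in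
    by_cases hij : i = j
    · subst hij
      exact ⟨T, rfl, Finset.sum_le_sum fun l _ => by
        by_cases hl : l = i
        · subst hl; omega
        · rw [hoff l hl hl]⟩
    · refine ⟨T, rfl, ?_⟩
      have hjm : j ∈ T.erase i := Finset.mem_erase.mpr ⟨fun h => hij h.symm, hj⟩
      have eB : ∑ l ∈ T, B l = ∑ l ∈ (T.erase i).erase j, B l + B j + B i := by
        rw [Finset.sum_erase_add _ _ hjm, Finset.sum_erase_add _ _ hi]
      have eA : ∑ l ∈ T, A l = ∑ l ∈ (T.erase i).erase j, A l + A j + A i := by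
        rw [Finset.sum_erase_add _ _ hjm, Finset.sum_erase_add _ _ hi]
      have eC : ∑ l ∈ (T.erase i).erase j, B l = ∑ l ∈ (T.erase i).erase j, A l := by
        refine Finset.sum_congr rfl fun l hl => ?_
        have h1 := Finset.mem_erase.mp hl
        have h2 := Finset.mem_erase.mp h1.2
        exact hoff l h2.1 h1.1
      omega
  · -- i in, j not
    have hij : i ≠ j := fun h => hj (h ▸ hi)
    have eB : ∑ l ∈ T, B l = ∑ l ∈ T.erase i, A l + B i := by
      rw [← Finset.sum_erase_add _ _ hi]
      congr 1
      refine Finset.sum_congr rfl fun l hl => ?_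
      have h1 := Finset.mem_erase.mp hl
      exact hoff l h1.1 (fun h => hj (h ▸ h1.2))
    rcases hb with ⟨h, -⟩ | ⟨h, -⟩
    · refine ⟨T, rfl, ?_⟩
      rw [← Finset.sum_erase_add _ A hi]
      omega
    · refine ⟨insert j (T.erase i), ?_, ?_⟩
      · rw [Finset.card_insert_of_notMem (fun h => hj (Finset.mem_erase.mp h).2),
          Finset.card_erase_of_mem hi]
        have : 0 < T.card := Finset.card_pos.mpr ⟨i, hi⟩
        omega
      · rw [Finset.sum_insert (fun h => hj (Finset.mem_erase.mp h).2)]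
        omega
  · -- j in, i not
    have hij : i ≠ j := fun h => hi (h ▸ hj)
    have eB : ∑ l ∈ T, B l = ∑ l ∈ T.erase j, A l + B j := by
      rw [← Finset.sum_erase_add _ _ hj]
      congr 1
      refine Finset.sum_congr rfl fun l hl => ?_
      have h1 := Finset.mem_erase.mp hl
      exact hoff l (fun h => hi (h ▸ h1.2)) h1.1
    rcases hb with ⟨-, h⟩ | ⟨-, h⟩
    · refine ⟨insert i (T.erase j), ?_, ?_⟩
      · rw [Finset.card_insert_of_notMem (fun h => hi (Finset.mem_erase.mp h).2),
          Finset.card_erase_of_mem hj]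
        have : 0 < T.card := Finset.card_pos.mpr ⟨j, hj⟩
        omega
      · rw [Finset.sum_insert (fun h => hi (Finset.mem_erase.mp h).2)]
        omega
    · refine ⟨T, rfl, ?_⟩
      rw [← Finset.sum_erase_add _ A hj]
      omega
  · -- neither
    refine ⟨T, rfl, le_of_eq (Finset.sum_congr rfl fun l hl => ?_)⟩
    exact hoff l (fun h => hi (h ▸ hl)) (fun h => hj (h ▸ hl))

lemma cnt_lt (A B : Fin n → ℤ) (i j i0 : Fin n)
    (hoff : ∀ l, l ≠ i → l ≠ j → B l = A l)
    (h1 : B i < A i0) (h2 : B j < A i0) (h3 : B i0 < A i0) :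
    ∑ l, (if A i0 ≤ B l then (1:ℤ) else 0) < ∑ l, (if A i0 ≤ A l then (1:ℤ) else 0) := by
  refine Finset.sum_lt_sum (fun l _ => ?_) ⟨i0, Finset.mem_univ _, ?_⟩
  · by_cases hli : l = i
    · subst hli; rw [if_neg (not_le.mpr h1)]; split_ifs <;> norm_num
    · by_cases hlj : l = j
      · subst hlj; rw [if_neg (not_le.mpr h2)]; split_ifs <;> norm_num
      · rw [hoff l hli hlj]
  · rw [if_neg (not_le.mpr h3), if_pos le_rfl]; norm_num

lemma master (μ ν mup nup : Fin n → ℤ) (i j : Fin n)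
    (hoff : ∀ l, l ≠ i → l ≠ j → ν l = μ l)
    (hsum : ((ν i).natAbs : ℤ) + ((ν j).natAbs : ℤ) ≤ ((μ i).natAbs : ℤ) + ((μ j).natAbs : ℤ))
    (hstr : (((ν i).natAbs : ℤ) < ((μ i).natAbs : ℤ) ∧ ((ν j).natAbs : ℤ) < ((μ i).natAbs : ℤ)) ∨
            (((ν i).natAbs : ℤ) < ((μ j).natAbs : ℤ) ∧ ((ν j).natAbs : ℤ) < ((μ j).natAbs : ℤ)))
    (hmu : IsDomRep μ mup) (hnu : IsDomRep ν nup) :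
    wle nup mup ∧ nup ≠ mup := by
  obtain ⟨⟨hms, hmp⟩, σ, s, hs, hμσ⟩ := hmu
  obtain ⟨⟨hns, hnp⟩, τ, t, ht, hντ⟩ := hnu
  set A : Fin n → ℤ := fun l => ((μ l).natAbs : ℤ) with hA
  set B : Fin n → ℤ := fun l => ((ν l).natAbs : ℤ) with hB
  have hmA : ∀ l, mup l = A (σ l) := by
    intro l
    have h2 := hμσ l
    have h3 := hmp l
    rcases hs l with h | h <;> rw [h] at h2 <;> simp only [hA] <;> omega
  have hnB : ∀ l, nup l = B (τ l) := by
    intro l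
    have h2 := hντ l
    have h3 := hnp l
    rcases ht l with h | h <;> rw [h] at h2 <;> simp only [hB] <;> omega
  have hoffAB : ∀ l, l ≠ i → l ≠ j → B l = A l := by
    intro l h1 h2; simp only [hA, hB, hoff l h1 h2]
  have hb : (B i ≤ A i ∧ B j ≤ A i) ∨ (B i ≤ A j ∧ B j ≤ A j) := by
    simp only [hA, hB]
    rcases hstr with ⟨u1, u2⟩ | ⟨u1, u2⟩
    · left; omega
    · right; omega
  have hsumAB : B i + B j ≤ A i + A j := by simp only [hA, hB]; exact hsum
  constructor
  · rw [wle, qpos_iff]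
    intro k
    have hsub : psum (mup - nup) k = psum mup k - psum nup k := by
      simp [psum, Pi.sub_apply, Finset.sum_sub_distrib]
    rw [hsub]
    set F := Finset.univ.filter (· ≤ k) with hF
    have hinj : ∀ x ∈ F, ∀ y ∈ F, τ x = τ y → x = y := fun x _ y _ h => τ.injective h
    have h1 : psum nup k = ∑ m ∈ F.image τ, B m := by
      rw [Finset.sum_image hinj]
      exact Finset.sum_congr rfl fun l _ => hnB l
    obtain ⟨T', hc, hle⟩ := exch A B i j hoffAB hb hsumAB (F.image τ)
    have hcF : (F.image τ).card = F.card := Finset.card_image_of_injective _ τ.injective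
    have hinj2 : ∀ x ∈ T', ∀ y ∈ T', σ.symm x = σ.symm y → x = y :=
      fun x _ y _ h => σ.symm.injective h
    have h3 : ∑ m ∈ T'.image σ.symm, mup m = ∑ m ∈ T', A m := by
      rw [Finset.sum_image hinj2]
      refine Finset.sum_congr rfl fun m _ => ?_
      rw [hmA (σ.symm m), Equiv.apply_symm_apply]
    have h2 : ∑ m ∈ T'.image σ.symm, mup m ≤ psum mup k := by
      refine sum_le_psum mup hms k _ ?_
      rw [Finset.card_image_of_injective _ σ.symm.injective, hc, hcF]
    omega
  · intro heq
    have hkey : ∀ m : ℤ, ∑ l, (if m ≤ B l then (1:ℤ) else 0) = ∑ l, (if m ≤ A l then (1:ℤ) else 0) := by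
      intro m
      calc ∑ l, (if m ≤ B l then (1:ℤ) else 0)
          = ∑ l, (if m ≤ B (τ l) then (1:ℤ) else 0) :=
            (Equiv.sum_comp τ (fun l => if m ≤ B l then (1:ℤ) else 0)).symm
        _ = ∑ l, (if m ≤ nup l then (1:ℤ) else 0) := by
            refine Finset.sum_congr rfl fun l _ => by rw [hnB l]
        _ = ∑ l, (if m ≤ mup l then (1:ℤ) else 0) := by rw [heq]
        _ = ∑ l, (if m ≤ A (σ l) then (1:ℤ) else 0) := by
            refine Finset.sum_congr rfl fun l _ => by rw [hmA l]
        _ = ∑ l, (if m ≤ A l then (1:ℤ) else 0) :=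
            Equiv.sum_comp σ (fun l => if m ≤ A l then (1:ℤ) else 0)
    rcases hstr with ⟨u1, u2⟩ | ⟨u1, u2⟩
    · have := cnt_lt A B i j i hoffAB u1 u2 u1
      rw [hkey (A i)] at this
      exact absurd this (lt_irrefl _)
    · have := cnt_lt A B i j j hoffAB u1 u2 u2
      rw [hkey (A j)] at this
      exact absurd this (lt_irrefl _)




lemma sum_ind (i : Fin n) : ∑ l, (if l = i then (1:ℤ) else 0) = 1 := by
  rw [Finset.sum_ite_eq' Finset.univ i (fun _ => (1:ℤ))]
  simp

lemma ipz_sub (μ : Fin n → ℤ) (i j : Fin n) : ipz μ (ez i - ez j) = μ i - μ j := by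
  simp [ipz, ez, Pi.sub_apply, mul_sub, Finset.sum_sub_distrib, mul_ite, mul_one, mul_zero,
    Finset.sum_ite_eq']

lemma ipz_add (μ : Fin n → ℤ) (i j : Fin n) : ipz μ (ez i + ez j) = μ i + μ j := by
  simp [ipz, ez, Pi.add_apply, mul_add, Finset.sum_add_distrib, mul_ite, mul_one, mul_zero,
    Finset.sum_ite_eq']

lemma ipz_two (μ : Fin n → ℤ) (i : Fin n) : ipz μ ((2:ℤ) • ez i) = 2 * μ i := by
  simp [ipz, ez, Pi.smul_apply, smul_eq_mul, mul_ite, mul_one, mul_zero, Finset.sum_ite_eq',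
    mul_comm]

lemma ssq_sub (i j : Fin n) (hij : i ≠ j) :
    ∑ l, (ez i - ez j) l * (ez i - ez j) l = 2 := by
  have h : ∀ l : Fin n, (ez i - ez j) l * (ez i - ez j) l
      = (if l = i then (1:ℤ) else 0) + (if l = j then 1 else 0) := by
    intro l
    simp only [Pi.sub_apply, ez]
    by_cases h1 : l = i
    · subst h1; rw [if_neg hij]; norm_num
    · by_cases h2 : l = j
      · subst h2; rw [if_neg (fun h : l = i => hij h.symm)]; norm_num
      · simp [h1, h2]
  rw [Finset.sum_congr rfl fun l _ => h l, Finset.sum_add_distrib, sum_ind, sum_ind]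
  norm_num

lemma ssq_add (i j : Fin n) (hij : i ≠ j) :
    ∑ l, (ez i + ez j) l * (ez i + ez j) l = 2 := by
  have h : ∀ l : Fin n, (ez i + ez j) l * (ez i + ez j) l
      = (if l = i then (1:ℤ) else 0) + (if l = j then 1 else 0) := by
    intro l
    simp only [Pi.add_apply, ez]
    by_cases h1 : l = i
    · subst h1; rw [if_neg hij]; norm_num
    · by_cases h2 : l = j
      · subst h2; rw [if_neg (fun h : l = i => hij h.symm)]; norm_num
      · simp [h1, h2]
  rw [Finset.sum_congr rfl fun l _ => h l, Finset.sum_add_distrib, sum_ind, sum_ind]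
  norm_num

lemma ssq_two (i : Fin n) : ∑ l, ((2:ℤ) • ez i) l * ((2:ℤ) • ez i) l = 4 := by
  have h : ∀ l : Fin n, ((2:ℤ) • ez i) l * ((2:ℤ) • ez i) l
      = (if l = i then (4:ℤ) else 0) := by
    intro l
    simp only [Pi.smul_apply, smul_eq_mul, ez]
    by_cases h1 : l = i <;> simp [h1]
  rw [Finset.sum_congr rfl fun l _ => h l,
    Finset.sum_ite_eq' Finset.univ i (fun _ => (4:ℤ))]
  simp

lemma coroot_sub (i j : Fin n) (hij : i ≠ j) :
    ∀ l, coroot (ez i - ez j) l = (if l = i then (1:ℤ) else 0) - (if l = j then 1 else 0) := by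
  intro l
  show (2 * (ez i - ez j) l) / (∑ m, (ez i - ez j) m * (ez i - ez j) m) = _
  rw [ssq_sub i j hij]
  simp only [Pi.sub_apply, ez]
  split_ifs <;> norm_num

lemma coroot_add (i j : Fin n) (hij : i ≠ j) :
    ∀ l, coroot (ez i + ez j) l = (if l = i then (1:ℤ) else 0) + (if l = j then 1 else 0) := by
  intro l
  show (2 * (ez i + ez j) l) / (∑ m, (ez i + ez j) m * (ez i + ez j) m) = _
  rw [ssq_add i j hij]
  simp only [Pi.add_apply, ez]
  split_ifs with h1 h2 h2
  · exact absurd (h1.symm.trans h2) hij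
  · norm_num
  · norm_num
  · norm_num

lemma coroot_two (i : Fin n) :
    ∀ l, coroot ((2:ℤ) • ez i) l = (if l = i then (1:ℤ) else 0) := by
  intro l
  show (2 * ((2:ℤ) • ez i) l) / (∑ m, ((2:ℤ) • ez i) m * ((2:ℤ) • ez i) m) = _
  rw [ssq_two i]
  simp only [Pi.smul_apply, smul_eq_mul, ez]
  split_ifs <;> norm_num


/-- if ⟨μ, α⟩ ≤ −2 then μ + rα^∨ ≺ μ for r = 1, …, −⟨μ,α⟩ − 1, where
ν ≺ μ means ν⁺ < μ⁺, or ν⁺ = μ⁺ and ν < μ (with < induced by Q^{∨,+}). -/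
theorem stmt3 (n : ℕ) (μ : Fin n → ℤ) (α : Fin n → ℤ) (hα : α ∈ SigmaPlus n)
    (h2 : ipz μ α ≤ -2) (r : ℤ) (hr1 : 1 ≤ r) (hr2 : r ≤ -ipz μ α - 1)
    (mup nup : Fin n → ℤ)
    (hmu : IsDomRep μ mup) (hnu : IsDomRep (μ + r • coroot α) nup) :
    (wle nup mup ∧ nup ≠ mup) ∨
      (nup = mup ∧ wle (μ + r • coroot α) μ ∧ μ + r • coroot α ≠ μ) := by
  left
  set ν := μ + r • coroot α with hν
  have hνl : ∀ l, ν l = μ l + r * coroot α l := fun l => by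
    simp [hν, Pi.add_apply, Pi.smul_apply, smul_eq_mul]
  rcases hα with ⟨i, j, hlt, hc | hc⟩ | ⟨i, hc⟩
  · -- α = ez i - ez j
    have hij : i ≠ j := ne_of_lt hlt
    subst hc
    rw [ipz_sub] at h2 hr2
    have hνi : ν i = μ i + r := by
      rw [hνl i, coroot_sub i j hij i, if_pos rfl, if_neg hij]; ring
    have hνj : ν j = μ j - r := by
      rw [hνl j, coroot_sub i j hij j, if_neg (fun h : j = i => hij h.symm), if_pos rfl]; ring
    have hoff : ∀ l, l ≠ i → l ≠ j → ν l = μ l := by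
      intro l h1' h2'
      rw [hνl l, coroot_sub i j hij l, if_neg h1', if_neg h2']; ring
    refine master μ ν mup nup i j hoff ?_ ?_ hmu hnu
    · rw [hνi, hνj]; omega
    · rw [hνi, hνj]; omega
  · -- α = ez i + ez j
    have hij : i ≠ j := ne_of_lt hlt
    subst hc
    rw [ipz_add] at h2 hr2
    have hνi : ν i = μ i + r := by
      rw [hνl i, coroot_add i j hij i, if_pos rfl, if_neg hij]; ring
    have hνj : ν j = μ j + r := by
      rw [hνl j, coroot_add i j hij j, if_neg (fun h : j = i => hij h.symm), if_pos rfl]; ring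
    have hoff : ∀ l, l ≠ i → l ≠ j → ν l = μ l := by
      intro l h1' h2'
      rw [hνl l, coroot_add i j hij l, if_neg h1', if_neg h2']; ring
    refine master μ ν mup nup i j hoff ?_ ?_ hmu hnu
    · rw [hνi, hνj]; omega
    · rw [hνi, hνj]; omega
  · -- α = 2 ez i
    subst hc
    rw [ipz_two] at h2 hr2
    have hνi : ν i = μ i + r := by
      rw [hνl i, coroot_two i i, if_pos rfl]; ring
    have hoff : ∀ l, l ≠ i → l ≠ i → ν l = μ l := by
      intro l h1' _
      rw [hνl l, coroot_two i l, if_neg h1']; ring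
    refine master μ ν mup nup i i hoff ?_ ?_ hmu hnu
    · rw [hνi]; omega
    · rw [hνi]; omega



end
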